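/- Suppose 𝒞 ⊂ L⁰_c is solid and 𝒫-sensitive with a reduction set 𝒬 ⊂ 𝔓_c(Ω) consisting of supported probability measures. Then the following are equivalent: (1) 𝒞 is order closed; (2) 𝒞 is sequentially order closed; (3) 𝒞 is 𝒬-closed; (4) 𝒞 is locally Q-closed for each Q ∈ 𝒬; (5) j_Q(𝒞) is Q-closed in L⁰_Q for each Q ∈ 𝒬; (6) j_Q(𝒞) is order closed with respect to the Q-a.s. order on L⁰_Q for each Q ∈ 𝒬; (7) j_Q(𝒞) is sequentially order closed with respect to the Q-a.s. order on L⁰_Q for each Q ∈ 𝒬. -/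

import Mathlib

open MeasureTheory Filter Set
open scoped ENNReal

namespace Robust

variable {Ω : Type*} [MeasurableSpace Ω]

/-- `Q` vanishes on every `𝔓`-polar set, i.e. `Q ≪ 𝔓`. -/
def AC (𝔓 : Set (Measure Ω)) (Q : Measure Ω) : Prop :=
  ∀ N : Set Ω, MeasurableSet N → (∀ P ∈ 𝔓, P N = 0) → Q N = 0

/-- `𝔓_c(Ω)`: probability measures vanishing on all `𝔓`-polar sets. -/
def PC (𝔓 : Set (Measure Ω)) : Set (Measure Ω) :=
  {Q | IsProbabilityMeasure Q ∧ AC 𝔓 Q}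

/-- `𝔓`-quasi-sure equality of random variables. -/
def QSEq (𝔓 : Set (Measure Ω)) (f g : Ω → ℝ) : Prop := ∀ P ∈ 𝔓, f =ᵐ[P] g

/-- The `𝔓`-quasi-sure order. -/
def QSLe (𝔓 : Set (Measure Ω)) (f g : Ω → ℝ) : Prop := ∀ P ∈ 𝔓, f ≤ᵐ[P] g

/-- Representatives of elements of `L⁰`: the measurable functions. -/
def L0 (Ω : Type*) [MeasurableSpace Ω] : Set (Ω → ℝ) := {f | Measurable f}

/-- Representatives of elements of the positive cone `L⁰_{c+}`. -/
def L0pos (𝔓 : Set (Measure Ω)) : Set (Ω → ℝ) :=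
  {f | Measurable f ∧ QSLe 𝔓 (fun _ => 0) f}

/-- Representatives of elements of `L^∞_c`. -/
def Linf (𝔓 : Set (Measure Ω)) : Set (Ω → ℝ) :=
  {f | Measurable f ∧ ∃ m : ℝ, 0 < m ∧ QSLe 𝔓 (fun ω => |f ω|) (fun _ => m)}

/-- Representatives of elements of `L^∞_{c+}`. -/
def LinfPos (𝔓 : Set (Measure Ω)) : Set (Ω → ℝ) :=
  {f | f ∈ Linf 𝔓 ∧ QSLe 𝔓 (fun _ => 0) f}

/-- A set of functions representing a set of equivalence classes in `L⁰_c`: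
it consists of measurable functions and is saturated under `𝔓`-q.s. equality. -/
def IsL0Set (𝔓 : Set (Measure Ω)) (𝒞 : Set (Ω → ℝ)) : Prop :=
  𝒞 ⊆ L0 Ω ∧ ∀ f ∈ 𝒞, ∀ g : Ω → ℝ, Measurable g → QSEq 𝔓 f g → g ∈ 𝒞

/-- Function-level version of `j_Q⁻¹ (j_Q 𝒞)` (equivalently, of the subset `j_Q 𝒞` of `L⁰_Q`):
the `Q`-a.s. saturation of `𝒞`. -/
def jSat (Q : Measure Ω) (𝒞 : Set (Ω → ℝ)) : Set (Ω → ℝ) :=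
  {f | Measurable f ∧ ∃ g ∈ 𝒞, f =ᵐ[Q] g}

/-- `𝒬` is a reduction set for `𝒞`. -/
def IsReductionSet (𝔓 𝒬 : Set (Measure Ω)) (𝒞 : Set (Ω → ℝ)) : Prop :=
  𝒬.Nonempty ∧ 𝒬 ⊆ PC 𝔓 ∧ 𝒞 = ⋂ Q ∈ 𝒬, jSat Q 𝒞

/-- `𝒞` is `𝔓`-sensitive. -/
def Sensitive (𝔓 : Set (Measure Ω)) (𝒞 : Set (Ω → ℝ)) : Prop :=
  𝒞 = ⋂ Q ∈ PC 𝔓, jSat Q 𝒞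

/-- `𝒞` is `𝒬`-closed: closed under sequential convergence in `Q`-probability for all `Q ∈ 𝒬`
simultaneously. -/
def QClosedSet (𝒬 : Set (Measure Ω)) (𝒞 : Set (Ω → ℝ)) : Prop :=
  ∀ (X : ℕ → Ω → ℝ) (x : Ω → ℝ), (∀ n, X n ∈ 𝒞) → Measurable x →
    (∀ Q ∈ 𝒬, TendstoInMeasure Q X atTop x) → x ∈ 𝒞

/-- `𝒞` is locally `Q`-closed. -/
def LocallyQClosed (Q : Measure Ω) (𝒞 : Set (Ω → ℝ)) : Prop :=
  ∀ (X : ℕ → Ω → ℝ) (x : Ω → ℝ), (∀ n, X n ∈ 𝒞) → Measurable x →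
    TendstoInMeasure Q X atTop x → ∃ y ∈ 𝒞, x =ᵐ[Q] y

/-- `𝒞` is solid in `L⁰_c` (w.r.t. the quasi-sure order of `𝔓`). -/
def SolidL0 (𝔓 : Set (Measure Ω)) (𝒞 : Set (Ω → ℝ)) : Prop :=
  ∀ f ∈ 𝒞, ∀ g : Ω → ℝ, Measurable g →
    QSLe 𝔓 (fun ω => |g ω|) (fun ω => |f ω|) → g ∈ 𝒞

/-- `𝒞` is solid in `L⁰_{c+}`. -/
def SolidPos (𝔓 : Set (Measure Ω)) (𝒞 : Set (Ω → ℝ)) : Prop :=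
  𝒞 ⊆ L0pos 𝔓 ∧ ∀ f ∈ 𝒞, ∀ g ∈ L0pos 𝔓, QSLe 𝔓 g f → g ∈ 𝒞

/-- `𝒞` is solid (in either of the two senses). -/
def Solid (𝔓 : Set (Measure Ω)) (𝒞 : Set (Ω → ℝ)) : Prop :=
  SolidL0 𝔓 𝒞 ∨ SolidPos 𝔓 𝒞

/-- `f` is the infimum (greatest lower bound) of the family `Y` in the `𝔓`-q.s. order. -/
def IsQSInf (𝔓 : Set (Measure Ω)) {ι : Sort*} (Y : ι → Ω → ℝ) (f : Ω → ℝ) : Prop :=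
  (∀ a, QSLe 𝔓 f (Y a)) ∧
    ∀ g : Ω → ℝ, Measurable g → (∀ a, QSLe 𝔓 g (Y a)) → QSLe 𝔓 g f

/-- `f` is the supremum (least upper bound) of the family `Y` in the `𝔓`-q.s. order. -/
def IsQSSup (𝔓 : Set (Measure Ω)) {ι : Sort*} (Y : ι → Ω → ℝ) (f : Ω → ℝ) : Prop :=
  (∀ a, QSLe 𝔓 (Y a) f) ∧
    ∀ g : Ω → ℝ, Measurable g → (∀ a, QSLe 𝔓 (Y a) g) → QSLe 𝔓 f g

/-- Order convergence of a sequence in `L⁰_c`. -/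
def SeqOrderConv (𝔓 : Set (Measure Ω)) (X : ℕ → Ω → ℝ) (x : Ω → ℝ) : Prop :=
  ∃ Y : ℕ → Ω → ℝ, (∀ n, Measurable (Y n)) ∧
    (∀ m n : ℕ, m ≤ n → QSLe 𝔓 (Y n) (Y m)) ∧
    IsQSInf 𝔓 Y (fun _ => 0) ∧
    ∀ n, QSLe 𝔓 (fun ω => |X n ω - x ω|) (Y n)

/-- `𝒞` is sequentially order closed. -/
def SeqOrderClosed (𝔓 : Set (Measure Ω)) (𝒞 : Set (Ω → ℝ)) : Prop :=
  ∀ (X : ℕ → Ω → ℝ) (x : Ω → ℝ), (∀ n, X n ∈ 𝒞) → Measurable x →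
    SeqOrderConv 𝔓 X x → x ∈ 𝒞

/-- Order convergence of a net in `L⁰_c`. -/
def NetOrderConv (𝔓 : Set (Measure Ω)) {ι : Type*} [Preorder ι]
    (X : ι → Ω → ℝ) (x : Ω → ℝ) : Prop :=
  ∃ Y : ι → Ω → ℝ, (∀ a, Measurable (Y a)) ∧
    (∀ a b : ι, a ≤ b → QSLe 𝔓 (Y b) (Y a)) ∧
    IsQSInf 𝔓 Y (fun _ => 0) ∧
    ∀ a, QSLe 𝔓 (fun ω => |X a ω - x ω|) (Y a)

/-- `𝒞` is order closed (w.r.t. order convergence of nets). -/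
def OrderClosed (𝔓 : Set (Measure Ω)) (𝒞 : Set (Ω → ℝ)) : Prop :=
  ∀ (ι : Type*) [Preorder ι] [IsDirected ι (· ≤ ·)] [Nonempty ι],
    ∀ (X : ι → Ω → ℝ) (x : Ω → ℝ), (∀ a, X a ∈ 𝒞) → Measurable x →
      NetOrderConv 𝔓 X x → x ∈ 𝒞

/-- Order convergence of all (directed) nets is preserved under `j_Q`. -/
def NetOrderConvTransfer (𝔓 : Set (Measure Ω)) (Q : Measure Ω) : Prop :=
  ∀ (ι : Type*) [Preorder ι] [IsDirected ι (· ≤ ·)] [Nonempty ι],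
    ∀ (X : ι → Ω → ℝ) (x : Ω → ℝ), (∀ a, Measurable (X a)) → Measurable x →
      NetOrderConv 𝔓 X x → NetOrderConv {Q} X x

/-- A measure is supported (relative to the `𝔓`-polar sets). -/
def SupportedMeasure (𝔓 : Set (Measure Ω)) (μ : Measure Ω) : Prop :=
  ∃ S : Set Ω, MeasurableSet S ∧ μ Sᶜ = 0 ∧
    ∀ N : Set Ω, MeasurableSet N → μ (N ∩ S) = 0 → ∀ P ∈ 𝔓, P (N ∩ S) = 0

/-- The (possibly infinite) expectation `E_Q[f]` of a (q.s.) non-negative random variable. -/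
noncomputable def EExp (Q : Measure Ω) (f : Ω → ℝ) : ℝ≥0∞ :=
  ∫⁻ ω, ENNReal.ofReal (f ω) ∂Q

/-- The polar `𝒞°_𝒬` of `𝒞` consisting of pairs `(Q, Z)` with `Q ∈ 𝒬` and `Z` in the
set `Zs` of dual test functions (e.g. `L^∞_{c+}` or `L⁰_{c+}`). -/
def polarPairs (𝒬 : Set (Measure Ω)) (Zs 𝒞 : Set (Ω → ℝ)) :
    Set (Measure Ω × (Ω → ℝ)) :=
  {p | p.1 ∈ 𝒬 ∧ p.2 ∈ Zs ∧ ∀ f ∈ 𝒞, EExp p.1 (fun ω => p.2 ω * f ω) ≤ 1}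

/-- The bipolar `𝒞°°_𝒬` of `𝒞`. -/
def bipolarPairs (𝔓 𝒬 : Set (Measure Ω)) (Zs 𝒞 : Set (Ω → ℝ)) : Set (Ω → ℝ) :=
  {f | f ∈ L0pos 𝔓 ∧ ∀ p ∈ polarPairs 𝒬 Zs 𝒞, EExp p.1 (fun ω => p.2 ω * f ω) ≤ 1}

/-- The polar `𝒞^*_𝒬` with a uniform (supremum) constraint. -/
def starPolar (𝔓 𝒬 : Set (Measure Ω)) (𝒞 : Set (Ω → ℝ)) : Set (Ω → ℝ) :=
  {Z | Z ∈ LinfPos 𝔓 ∧ ∀ f ∈ 𝒞, (⨆ Q ∈ 𝒬, EExp Q fun ω => Z ω * f ω) ≤ 1}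

/-- The bipolar `𝒞^{**}_𝒬` with a uniform (supremum) constraint. -/
def starBipolar (𝔓 𝒬 : Set (Measure Ω)) (𝒞 : Set (Ω → ℝ)) : Set (Ω → ℝ) :=
  {f | f ∈ L0pos 𝔓 ∧ ∀ Z ∈ starPolar 𝔓 𝒬 𝒞, (⨆ Q ∈ 𝒬, EExp Q fun ω => Z ω * f ω) ≤ 1}

/-- `ca_c`: finite signed measures vanishing on all `𝔓`-polar sets. -/
def CAc (𝔓 : Set (Measure Ω)) : Set (SignedMeasure Ω) :=
  {ν | ∀ N : Set Ω, MeasurableSet N → (∀ P ∈ 𝔓, P N = 0) → ν.totalVariation N = 0}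

/-- A signed measure is supported if its total variation is. -/
def SupportedSigned (𝔓 : Set (Measure Ω)) (ν : SignedMeasure Ω) : Prop :=
  SupportedMeasure 𝔓 ν.totalVariation

/-- `sca_c`: supported signed measures in `ca_c`. -/
def SCAc (𝔓 : Set (Measure Ω)) : Set (SignedMeasure Ω) :=
  {ν | ν ∈ CAc 𝔓 ∧ SupportedSigned 𝔓 ν}

/-- A signed measure is non-negative. -/
def nonnegSM (ν : SignedMeasure Ω) : Prop := ∀ N : Set Ω, MeasurableSet N → 0 ≤ ν N

/-- The measure associated to a non-negative signed measure (its Jordan positive part). -/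
noncomputable def posMeas (ν : SignedMeasure Ω) : Measure Ω :=
  ν.toJordanDecomposition.posPart

/-- The pairing `∫ f dν` of a function with a signed measure. -/
noncomputable def pairSM (ν : SignedMeasure Ω) (f : Ω → ℝ) : ℝ :=
  ∫ ω, f ω ∂ν.toJordanDecomposition.posPart - ∫ ω, f ω ∂ν.toJordanDecomposition.negPart

/-- The total variation `|ν|` of a signed measure, as a signed measure. -/
noncomputable def tvSigned (ν : SignedMeasure Ω) : SignedMeasure Ω :=
  ν.toJordanDecomposition.posPart.toSignedMeasure +
    ν.toJordanDecomposition.negPart.toSignedMeasure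

/-- `𝔓` is of class (S). -/
def ClassS (𝔓 : Set (Measure Ω)) : Prop :=
  ∃ 𝒬 : Set (Measure Ω), 𝒬 ⊆ PC 𝔓 ∧ (∀ Q ∈ 𝒬, SupportedMeasure 𝔓 Q) ∧
    ∀ N : Set Ω, MeasurableSet N → ((∀ P ∈ 𝔓, P N = 0) ↔ ∀ Q ∈ 𝒬, Q N = 0)

/-- The polar `𝒞°_{ca}` of `𝒞 ⊂ L⁰_{c+}` inside `ca_{c+}` (non-negative members of `ca_c`). -/
def polarCA (𝔓 : Set (Measure Ω)) (𝒞 : Set (Ω → ℝ)) : Set (SignedMeasure Ω) :=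
  {ν | nonnegSM ν ∧ ν ∈ CAc 𝔓 ∧ ∀ f ∈ 𝒞, EExp (posMeas ν) f ≤ 1}

/-- The bipolar `𝒞°°_{ca}`. -/
def bipolarCA (𝔓 : Set (Measure Ω)) (𝒞 : Set (Ω → ℝ)) : Set (Ω → ℝ) :=
  {f | f ∈ L0pos 𝔓 ∧ ∀ ν ∈ polarCA 𝔓 𝒞, EExp (posMeas ν) f ≤ 1}

/-- The polar `𝒞°_{sca}` of `𝒞 ⊂ L⁰_{c+}` inside `sca_{c+}`. -/
def polarSCA (𝔓 : Set (Measure Ω)) (𝒞 : Set (Ω → ℝ)) : Set (SignedMeasure Ω) :=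
  {ν | nonnegSM ν ∧ ν ∈ SCAc 𝔓 ∧ ∀ f ∈ 𝒞, EExp (posMeas ν) f ≤ 1}

/-- The bipolar `𝒞°°_{sca}`. -/
def bipolarSCA (𝔓 : Set (Measure Ω)) (𝒞 : Set (Ω → ℝ)) : Set (Ω → ℝ) :=
  {f | f ∈ L0pos 𝔓 ∧ ∀ ν ∈ polarSCA 𝔓 𝒞, EExp (posMeas ν) f ≤ 1}

/-- The weak topology `σ(M, L^∞_c)` on a set `M` of signed measures. -/
noncomputable def sigmaTop (𝔓 : Set (Measure Ω)) (M : Set (SignedMeasure Ω)) :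
    TopologicalSpace M :=
  TopologicalSpace.induced
    (fun ν : M => fun X : Linf 𝔓 => pairSM ν.1 X.1) inferInstance

/-- The weak topology `σ(𝒳, 𝒴)` on `𝒳 ⊂ L⁰_c` induced by a set `𝒴` of signed measures. -/
noncomputable def sigmaTopDual (𝒳 : Set (Ω → ℝ)) (𝒴 : Set (SignedMeasure Ω)) :
    TopologicalSpace 𝒳 :=
  TopologicalSpace.induced
    (fun f : 𝒳 => fun ν : 𝒴 => pairSM ν.1 f.1) inferInstance

/-- `𝒞` is `𝒬`-stable: it contains every `𝒬`-aggregator of every `𝒬`-coherent family in `𝒞`. -/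
def QStable (𝒬 : Set (Measure Ω)) (𝒞 : Set (Ω → ℝ)) : Prop :=
  ∀ X : Measure Ω → Ω → ℝ, (∀ Q ∈ 𝒬, X Q ∈ 𝒞) →
    ∀ x : Ω → ℝ, Measurable x → (∀ Q ∈ 𝒬, X Q =ᵐ[Q] x) → x ∈ 𝒞


/-- Pointwise infimum of an antitone nonneg sequence, measurably. -/
lemma exists_inf (Y : ℕ → Ω → ℝ) (hY : ∀ n, Measurable (Y n)) :
    ∃ Z : Ω → ℝ, Measurable Z ∧ ∀ ω, (∀ n, 0 ≤ Y n ω) → Antitone (fun n => Y n ω) →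
      0 ≤ Z ω ∧ (∀ n, Z ω ≤ Y n ω) ∧ Tendsto (fun n => Y n ω) atTop (nhds (Z ω)) := by
  refine ⟨fun ω => (⨅ n, ENNReal.ofReal (Y n ω)).toReal,
    (Measurable.iInf (fun n => (hY n).ennreal_ofReal)).ennreal_toReal, fun ω h0 hanti => ?_⟩
  set E : ℝ≥0∞ := ⨅ n, ENNReal.ofReal (Y n ω) with hE
  have hEne : E ≠ ⊤ := by
    refine ne_top_of_le_ne_top ENNReal.ofReal_ne_top (iInf_le _ 0)
  have hle : ∀ n, E.toReal ≤ Y n ω := by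
    intro n
    have := iInf_le (fun n => ENNReal.ofReal (Y n ω)) n
    calc E.toReal ≤ (ENNReal.ofReal (Y n ω)).toReal := ENNReal.toReal_mono ENNReal.ofReal_ne_top this
      _ = Y n ω := ENNReal.toReal_ofReal (h0 n)
  have hbdd : BddBelow (range fun n => Y n ω) := ⟨0, by rintro r ⟨n, rfl⟩; exact h0 n⟩
  have htend : Tendsto (fun n => Y n ω) atTop (nhds (⨅ n, Y n ω)) :=
    tendsto_atTop_ciInf hanti hbdd
  have hiInf0 : 0 ≤ ⨅ n, Y n ω := le_ciInf h0
  have heq : E.toReal = ⨅ n, Y n ω := by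
    refine le_antisymm (le_ciInf hle) ?_
    have : ENNReal.ofReal (⨅ n, Y n ω) ≤ E :=
      le_iInf fun n => ENNReal.ofReal_le_ofReal (ciInf_le hbdd n)
    calc (⨅ n, Y n ω) = (ENNReal.ofReal (⨅ n, Y n ω)).toReal := (ENNReal.toReal_ofReal hiInf0).symm
      _ ≤ E.toReal := ENNReal.toReal_mono hEne this
  refine ⟨ENNReal.toReal_nonneg, hle, ?_⟩
  show Tendsto _ _ (nhds E.toReal)
  rw [heq]
  exact htend

/-- Tail sup construction. -/
lemma exists_tailSup (X : ℕ → Ω → ℝ) (x : Ω → ℝ) (hX : ∀ n, Measurable (X n))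
    (hx : Measurable x) :
    ∃ Y : ℕ → Ω → ℝ, (∀ n, Measurable (Y n)) ∧ (∀ n ω, 0 ≤ Y n ω) ∧
      ∀ ω, Tendsto (fun n => X n ω) atTop (nhds (x ω)) →
        Antitone (fun n => Y n ω) ∧ (∀ n, |X n ω - x ω| ≤ Y n ω) ∧
          Tendsto (fun n => Y n ω) atTop (nhds 0) := by
  set E : ℕ → Ω → ℝ≥0∞ := fun n ω => ⨆ k, ENNReal.ofReal |X (n + k) ω - x ω| with hEdef
  refine ⟨fun n ω => (E n ω).toReal, fun n =>
    (Measurable.iSup (fun k => ((hX (n+k)).sub hx).abs.ennreal_ofReal)).ennreal_toReal,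
    fun n ω => ENNReal.toReal_nonneg, fun ω hconv => ?_⟩
  have habs : Tendsto (fun n => |X n ω - x ω|) atTop (nhds 0) := by
    have := hconv.sub_const (x ω)
    rw [sub_self] at this
    simpa using this.abs
  obtain ⟨C, hC⟩ := habs.bddAbove_range
  have hCmem : ∀ m, |X m ω - x ω| ≤ C := fun m => hC ⟨m, rfl⟩
  have hEle : ∀ n, E n ω ≤ ENNReal.ofReal C :=
    fun n => iSup_le fun k => ENNReal.ofReal_le_ofReal (hCmem _)
  have hEne : ∀ n, E n ω ≠ ⊤ := fun n => ne_top_of_le_ne_top ENNReal.ofReal_ne_top (hEle n)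
  have hEanti : Antitone (fun n => E n ω) := by
    intro m n hmn
    refine iSup_le fun k => ?_
    have : n + k = m + (n - m + k) := by omega
    rw [this]
    exact le_iSup (fun j => ENNReal.ofReal |X (m + j) ω - x ω|) (n - m + k)
  have hanti : Antitone (fun n => (E n ω).toReal) := fun m n h =>
    ENNReal.toReal_mono (hEne m) (hEanti h)
  have hge : ∀ n, |X n ω - x ω| ≤ (E n ω).toReal := by
    intro n
    have h1 : ENNReal.ofReal |X n ω - x ω| ≤ E n ω := by
      have := le_iSup (fun k => ENNReal.ofReal |X (n + k) ω - x ω|) 0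
      simpa using this
    calc |X n ω - x ω| = (ENNReal.ofReal |X n ω - x ω|).toReal :=
          (ENNReal.toReal_ofReal (abs_nonneg _)).symm
      _ ≤ (E n ω).toReal := ENNReal.toReal_mono (hEne n) h1
  have htend : Tendsto (fun n => (E n ω).toReal) atTop (nhds 0) := by
    rw [Metric.tendsto_atTop]
    intro ε hε
    rw [Metric.tendsto_atTop] at habs
    obtain ⟨N, hN⟩ := habs (ε / 2) (by linarith)
    refine ⟨N, fun n hn => ?_⟩
    have hE2 : E n ω ≤ ENNReal.ofReal (ε / 2) := by
      refine iSup_le fun k => ENNReal.ofReal_le_ofReal ?_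
      have := hN (n + k) (le_trans hn (Nat.le_add_right n k))
      rw [Real.dist_eq, sub_zero, abs_abs] at this
      exact this.le
    have : (E n ω).toReal ≤ ε / 2 := by
      calc (E n ω).toReal ≤ (ENNReal.ofReal (ε/2)).toReal :=
            ENNReal.toReal_mono ENNReal.ofReal_ne_top hE2
        _ = ε / 2 := ENNReal.toReal_ofReal (by linarith)
    rw [Real.dist_eq, sub_zero, abs_of_nonneg ENNReal.toReal_nonneg]
    linarith
  exact ⟨hanti, hge, htend⟩
lemma qsle_singleton {Q : Measure Ω} {f g : Ω → ℝ} : QSLe {Q} f g ↔ f ≤ᵐ[Q] g := by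
  constructor
  · exact fun h => h Q rfl
  · rintro h P rfl; exact h

lemma qsle_of_forall {𝔓 : Set (Measure Ω)} {f g : Ω → ℝ} (h : ∀ ω, f ω ≤ g ω) :
    QSLe 𝔓 f g := fun P _ => .of_forall h

/-- Transfer a q.s. inequality between measurable functions to `Q ∈ PC 𝔓`. -/
lemma qsle_to_ac {𝔓 : Set (Measure Ω)} {Q : Measure Ω} (hQac : AC 𝔓 Q)
    {f g : Ω → ℝ} (hf : Measurable f) (hg : Measurable g) (h : QSLe 𝔓 f g) :
    f ≤ᵐ[Q] g := by
  have hN : MeasurableSet {ω | ¬ f ω ≤ g ω} := by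
    have : {ω | ¬ f ω ≤ g ω} = {ω | g ω < f ω} := by
      ext ω; simp [not_le]
    rw [this]
    exact measurableSet_lt hg hf
  exact hQac _ hN fun P hP => h P hP

/-- A.s. convergence implies sequential order convergence w.r.t. `{Q}`. -/
lemma seqOrderConv_of_ae {Q : Measure Ω} {X : ℕ → Ω → ℝ} {x : Ω → ℝ}
    (hX : ∀ n, Measurable (X n)) (hx : Measurable x)
    (h : ∀ᵐ ω ∂Q, Tendsto (fun n => X n ω) atTop (nhds (x ω))) :
    SeqOrderConv {Q} X x := by
  obtain ⟨Y, hYmeas, hYpos, hYprop⟩ := exists_tailSup X x hX hx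
  refine ⟨Y, hYmeas, ?_, ⟨?_, ?_⟩, ?_⟩
  · intro m n hmn
    rw [qsle_singleton]
    filter_upwards [h] with ω hω
    exact (hYprop ω hω).1 hmn
  · intro n
    exact qsle_of_forall (hYpos n)
  · intro g hg hgle
    rw [qsle_singleton]
    have hgle' : ∀ᵐ ω ∂Q, ∀ n, g ω ≤ Y n ω := by
      rw [ae_all_iff]; intro n; exact qsle_singleton.1 (hgle n)
    filter_upwards [h, hgle'] with ω hω hgω
    exact ge_of_tendsto' ((hYprop ω hω).2.2) hgω
  · intro n
    rw [qsle_singleton]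
    filter_upwards [h] with ω hω
    exact (hYprop ω hω).2.1 n

/-- Everywhere convergence implies sequential order convergence w.r.t. any `𝔓`. -/
lemma seqOrderConv_of_forall {𝔓 : Set (Measure Ω)} {X : ℕ → Ω → ℝ} {x : Ω → ℝ}
    (hX : ∀ n, Measurable (X n)) (hx : Measurable x)
    (h : ∀ ω, Tendsto (fun n => X n ω) atTop (nhds (x ω))) :
    SeqOrderConv 𝔓 X x := by
  obtain ⟨Y, hYmeas, hYpos, hYprop⟩ := exists_tailSup X x hX hx
  refine ⟨Y, hYmeas, ?_, ⟨?_, ?_⟩, ?_⟩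
  · exact fun m n hmn => qsle_of_forall fun ω => (hYprop ω (h ω)).1 hmn
  · exact fun n => qsle_of_forall (hYpos n)
  · intro g hg hgle P hP
    have hgle' : ∀ᵐ ω ∂P, ∀ n, g ω ≤ Y n ω := by
      rw [ae_all_iff]; intro n; exact hgle n P hP
    filter_upwards [hgle'] with ω hgω
    exact ge_of_tendsto' ((hYprop ω (h ω)).2.2) hgω
  · exact fun n => qsle_of_forall fun ω => (hYprop ω (h ω)).2.1 n

/-- Sequential order convergence w.r.t. `{Q}` implies a.s. convergence. -/
lemma ae_tendsto_of_seqOrderConv {Q : Measure Ω} {X : ℕ → Ω → ℝ} {x : Ω → ℝ}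
    (h : SeqOrderConv {Q} X x) :
    ∀ᵐ ω ∂Q, Tendsto (fun n => X n ω) atTop (nhds (x ω)) := by
  obtain ⟨Y, hYmeas, hYanti, ⟨hlb, hglb⟩, hdom⟩ := h
  obtain ⟨Z, hZmeas, hZprop⟩ := exists_inf Y hYmeas
  have h0 : ∀ᵐ ω ∂Q, ∀ n, 0 ≤ Y n ω := by
    rw [ae_all_iff]; intro n; exact qsle_singleton.1 (hlb n)
  have hmono : ∀ᵐ ω ∂Q, ∀ m n : ℕ, m ≤ n → Y n ω ≤ Y m ω := by
    rw [ae_all_iff]; intro m; rw [ae_all_iff]; intro n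
    rcases le_or_gt m n with hmn | hmn
    · have := qsle_singleton.1 (hYanti m n hmn)
      filter_upwards [this] with ω hω _
      exact hω
    · filter_upwards with ω hω
      omega
  have hZle : ∀ᵐ ω ∂Q, ∀ n, Z ω ≤ Y n ω := by
    filter_upwards [h0, hmono] with ω h0ω hmω
    exact (hZprop ω h0ω (fun m n h => hmω m n h)).2.1
  have hZ0 : Z ≤ᵐ[Q] fun _ => (0:ℝ) := by
    refine qsle_singleton.1 (hglb Z hZmeas fun n => ?_)
    rw [qsle_singleton]
    filter_upwards [hZle] with ω hω using hω n
  have hdom' : ∀ᵐ ω ∂Q, ∀ n, |X n ω - x ω| ≤ Y n ω := by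
    rw [ae_all_iff]; intro n; exact qsle_singleton.1 (hdom n)
  filter_upwards [h0, hmono, hZ0, hdom'] with ω h0ω hmω hZω hdω
  have h0Z : 0 ≤ Z ω := (hZprop ω h0ω (fun m n h => hmω m n h)).1
  have hZeq : Z ω = 0 := le_antisymm hZω h0Z
  have hYtend : Tendsto (fun n => Y n ω) atTop (nhds 0) := by
    have := (hZprop ω h0ω (fun m n h => hmω m n h)).2.2
    rwa [hZeq] at this
  have habs : Tendsto (fun n => |X n ω - x ω|) atTop (nhds 0) :=
    squeeze_zero (fun n => abs_nonneg _) hdω hYtend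
  rw [tendsto_iff_norm_sub_tendsto_zero]
  simpa [Real.norm_eq_abs] using habs
/-- Transfer of "inf is 0" from the `𝔓`-q.s. order to a supported `Q ∈ 𝔓_c`. -/
lemma isQSInf_transfer {𝔓 : Set (Measure Ω)} {Q : Measure Ω} (hQac : AC 𝔓 Q)
    (hsupp : SupportedMeasure 𝔓 Q) {ι : Sort*} {Y : ι → Ω → ℝ}
    (hY : ∀ a, Measurable (Y a)) (h : IsQSInf 𝔓 Y (fun _ => 0)) :
    IsQSInf {Q} Y (fun _ => 0) := by
  obtain ⟨S, hSmeas, hSc, hSsupp⟩ := hsupp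
  refine ⟨fun a => qsle_singleton.2 (qsle_to_ac hQac measurable_const (hY a) (h.1 a)), ?_⟩
  intro g hg hgle
  rw [qsle_singleton]
  classical
  set g' : Ω → ℝ := fun ω => if ω ∈ S then g ω else 0 with hg'def
  have hg'meas : Measurable g' := Measurable.ite hSmeas hg measurable_const
  have hg'le : ∀ a, QSLe 𝔓 g' (Y a) := by
    intro a P hP
    set N : Set Ω := {ω | ¬ g ω ≤ Y a ω} with hNdef
    have hNmeas : MeasurableSet N := by
      have : N = {ω | Y a ω < g ω} := by ext ω; simp [hNdef, not_le]
      rw [this]; exact measurableSet_lt (hY a) hg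
    have hQN : Q N = 0 := qsle_singleton.1 (hgle a)
    have hQNS : Q (N ∩ S) = 0 :=
      measure_mono_null Set.inter_subset_left hQN
    have hPNS : P (N ∩ S) = 0 := hSsupp N hNmeas hQNS P hP
    have h1 : ∀ᵐ ω ∂P, ω ∉ N ∩ S := by
      rw [ae_iff]; simpa using hPNS
    filter_upwards [h1, h.1 a P hP] with ω hω h0ω
    by_cases hS : ω ∈ S
    · have : ω ∉ N := fun hN => hω ⟨hN, hS⟩
      simp only [hg'def, if_pos hS]
      exact not_not.1 (by simpa [hNdef] using this)
    · simp only [hg'def, if_neg hS]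
      exact h0ω
  have hqs : QSLe 𝔓 g' (fun _ => 0) := h.2 g' hg'meas hg'le
  have hQle : g' ≤ᵐ[Q] fun _ => 0 := qsle_to_ac hQac hg'meas measurable_const hqs
  have hScae : ∀ᵐ ω ∂Q, ω ∈ S := by
    rw [ae_iff]; exact hSc
  filter_upwards [hQle, hScae] with ω h1 h2
  simpa [hg'def, if_pos h2] using h1

/-- Transfer of net order convergence from `𝔓` to a supported `Q`. -/
lemma netOrderConv_transfer {𝔓 : Set (Measure Ω)} {Q : Measure Ω} (hQac : AC 𝔓 Q)
    (hsupp : SupportedMeasure 𝔓 Q) {ι : Type*} [Preorder ι]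
    {X : ι → Ω → ℝ} {x : Ω → ℝ} (hX : ∀ a, Measurable (X a)) (hx : Measurable x)
    (h : NetOrderConv 𝔓 X x) : NetOrderConv {Q} X x := by
  obtain ⟨Y, hYmeas, hYanti, hinf, hdom⟩ := h
  refine ⟨Y, hYmeas, ?_, isQSInf_transfer hQac hsupp hYmeas hinf, ?_⟩
  · intro a b hab
    exact qsle_singleton.2 (qsle_to_ac hQac (hYmeas b) (hYmeas a) (hYanti a b hab))
  · intro a
    exact qsle_singleton.2
      (qsle_to_ac hQac ((hX a).sub hx).abs (hYmeas a) (hdom a))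

/-- Transfer of sequential order convergence from `𝔓` to a supported `Q`. -/
lemma seqOrderConv_transfer {𝔓 : Set (Measure Ω)} {Q : Measure Ω} (hQac : AC 𝔓 Q)
    (hsupp : SupportedMeasure 𝔓 Q)
    {X : ℕ → Ω → ℝ} {x : Ω → ℝ} (hX : ∀ n, Measurable (X n)) (hx : Measurable x)
    (h : SeqOrderConv 𝔓 X x) : SeqOrderConv {Q} X x :=
  netOrderConv_transfer hQac hsupp hX hx h
/-- From a decreasing net with q.s. infimum `0` (w.r.t. a single probability `Q`),
extract a sequence along the net tending to `0` almost surely. -/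
lemma exists_seq_tendsto_ae_of_net {Q : Measure Ω} [IsProbabilityMeasure Q]
    {ι : Type*} [Preorder ι] [IsDirected ι (· ≤ ·)] [Nonempty ι]
    {Y : ι → Ω → ℝ} (hY : ∀ a, Measurable (Y a))
    (hanti : ∀ a b : ι, a ≤ b → QSLe {Q} (Y b) (Y a))
    (hinf : IsQSInf {Q} Y (fun _ => 0)) :
    ∃ β : ℕ → ι, ∀ᵐ ω ∂Q, Tendsto (fun n => Y (β n) ω) atTop (nhds 0) := by
  classical
  set φ : ℝ → ℝ := fun y => Real.arctan (max y 0) with hφdef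
  have hφmono : Monotone φ := fun a b hab =>
    Real.arctan_strictMono.monotone (max_le_max hab le_rfl)
  have hφcont : Continuous φ :=
    Real.continuous_arctan.comp (continuous_id.max continuous_const)
  have hφnonneg : ∀ y, 0 ≤ φ y := fun y => by
    have := hφmono (le_max_right y 0)
    simpa [hφdef, Real.arctan_zero] using
      (Real.arctan_strictMono.monotone (le_max_right y 0)).trans_eq' (by simp [Real.arctan_zero])
  have hφbdd : ∀ y, φ y ≤ Real.pi / 2 := fun y => (Real.arctan_lt_pi_div_two _).le
  -- integrability
  have hint : ∀ (f : Ω → ℝ), Measurable f → Integrable (fun ω => φ (f ω)) Q := by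
    intro f hf
    refine (integrable_const (Real.pi / 2)).mono'
      ((hφcont.measurable.comp hf).aestronglyMeasurable) ?_
    filter_upwards with ω
    rw [Real.norm_eq_abs, abs_of_nonneg (hφnonneg _)]
    exact hφbdd _
  set I : ι → ℝ := fun a => ∫ ω, φ (Y a ω) ∂Q with hIdef
  have hInonneg : ∀ a, 0 ≤ I a := fun a => integral_nonneg fun ω => hφnonneg _
  have hIbdd : BddBelow (range I) := ⟨0, by rintro r ⟨a, rfl⟩; exact hInonneg a⟩
  set m : ℝ := ⨅ a, I a with hmdef
  have hmle : ∀ a, m ≤ I a := fun a => ciInf_le hIbdd a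
  -- choose a sequence approaching the infimum
  have hα : ∀ n : ℕ, ∃ a : ι, I a < m + 1 / (n + 1) := by
    intro n
    apply exists_lt_of_ciInf_lt
    rw [← hmdef]
    have : (0:ℝ) < 1 / (n + 1) := by positivity
    linarith
  choose α hα using hα
  -- build a monotone cofinal-ish sequence β
  have hstep : ∀ (b : ι) (n : ℕ), ∃ c, b ≤ c ∧ α n ≤ c := fun b n => exists_ge_ge b (α n)
  set β : ℕ → ι := fun n => Nat.rec (α 0) (fun n b => Classical.choose (hstep b (n + 1))) n
    with hβdef
  have hβsucc : ∀ n, β n ≤ β (n + 1) ∧ α (n + 1) ≤ β (n + 1) := fun n =>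
    Classical.choose_spec (hstep (β n) (n + 1))
  have hβmono : Monotone β := monotone_nat_of_le_succ fun n => (hβsucc n).1
  have hβα : ∀ n, α n ≤ β n := by
    intro n
    cases n with
    | zero => exact le_rfl
    | succ n => exact (hβsucc n).2
  -- I (β n) → m
  have hIanti : ∀ a b : ι, a ≤ b → I b ≤ I a := by
    intro a b hab
    refine integral_mono_ae (hint _ (hY b)) (hint _ (hY a)) ?_
    filter_upwards [qsle_singleton.1 (hanti a b hab)] with ω hω
    exact hφmono hω
  have hIβ : ∀ n : ℕ, I (β n) < m + 1 / (n + 1) :=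
    fun n => lt_of_le_of_lt (hIanti _ _ (hβα n)) (hα n)
  have hIβtend : Tendsto (fun n => I (β n)) atTop (nhds m) := by
    have h1 : Tendsto (fun n : ℕ => m + 1 / ((n:ℝ) + 1)) atTop (nhds (m + 0)) :=
      tendsto_const_nhds.add tendsto_one_div_add_atTop_nhds_zero_nat
    rw [add_zero] at h1
    refine tendsto_of_tendsto_of_tendsto_of_le_of_le tendsto_const_nhds h1
      (fun n => hmle _) (fun n => (hIβ n).le)
  -- a.e. monotonicity and nonnegativity along β
  have h0ae : ∀ᵐ ω ∂Q, ∀ n, 0 ≤ Y (β n) ω := by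
    rw [ae_all_iff]; intro n; exact qsle_singleton.1 (hinf.1 (β n))
  have hmonoae : ∀ᵐ ω ∂Q, ∀ p q : ℕ, p ≤ q → Y (β q) ω ≤ Y (β p) ω := by
    rw [ae_all_iff]; intro p; rw [ae_all_iff]; intro q
    rcases le_or_gt p q with hpq | hpq
    · filter_upwards [qsle_singleton.1 (hanti (β p) (β q) (hβmono hpq))] with ω hω _
      exact hω
    · filter_upwards with ω h; omega
  obtain ⟨Z, hZmeas, hZprop⟩ := exists_inf (fun n => Y (β n)) (fun n => hY (β n))
  have hG : ∀ᵐ ω ∂Q, (0 ≤ Z ω ∧ (∀ n, Z ω ≤ Y (β n) ω) ∧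
      Tendsto (fun n => Y (β n) ω) atTop (nhds (Z ω))) := by
    filter_upwards [h0ae, hmonoae] with ω h0 hm
    exact hZprop ω h0 (fun p q h => hm p q h)
  -- ∫ φ Z = m
  have hφZint : Integrable (fun ω => φ (Z ω)) Q := hint Z hZmeas
  have hIZ : ∫ ω, φ (Z ω) ∂Q = m := by
    have htend : Tendsto (fun n => I (β n)) atTop (nhds (∫ ω, φ (Z ω) ∂Q)) := by
      refine tendsto_integral_of_dominated_convergence (fun _ => Real.pi / 2)
        (fun n => (hφcont.measurable.comp (hY (β n))).aestronglyMeasurable)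
        (integrable_const _) (fun n => ?_) ?_
      · filter_upwards with ω
        rw [Real.norm_eq_abs, abs_of_nonneg (hφnonneg _)]
        exact hφbdd _
      · filter_upwards [hG] with ω hω
        exact (hφcont.tendsto _).comp hω.2.2
    exact tendsto_nhds_unique htend hIβtend
  -- Z is a lower bound of the whole net
  have hZlb : ∀ a, QSLe {Q} Z (Y a) := by
    intro a
    rw [qsle_singleton]
    -- choose γ n ≥ a, β n
    have hγex : ∀ n : ℕ, ∃ c : ι, a ≤ c ∧ β n ≤ c := fun n => exists_ge_ge a (β n)
    choose γ hγa hγβ using hγex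
    have hkey : m ≤ ∫ ω, φ (min (Y a ω) (Z ω)) ∂Q := by
      have hminint : ∀ n : ℕ, Integrable (fun ω => φ (min (Y a ω) (Y (β n) ω))) Q :=
        fun n => hint _ ((hY a).min (hY (β n)))
      have h1 : ∀ n : ℕ, m ≤ ∫ ω, φ (min (Y a ω) (Y (β n) ω)) ∂Q := by
        intro n
        refine le_trans (hmle (γ n)) ?_
        refine integral_mono_ae (hint _ (hY (γ n))) (hminint n) ?_
        filter_upwards [qsle_singleton.1 (hanti a (γ n) (hγa n)),
          qsle_singleton.1 (hanti (β n) (γ n) (hγβ n))] with ω h1 h2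
        exact hφmono (le_min h1 h2)
      have htend2 : Tendsto (fun n => ∫ ω, φ (min (Y a ω) (Y (β n) ω)) ∂Q) atTop
          (nhds (∫ ω, φ (min (Y a ω) (Z ω)) ∂Q)) := by
        refine tendsto_integral_of_dominated_convergence (fun _ => Real.pi / 2)
          (fun n => (hφcont.measurable.comp ((hY a).min (hY (β n)))).aestronglyMeasurable)
          (integrable_const _) (fun n => ?_) ?_
        · filter_upwards with ω
          rw [Real.norm_eq_abs, abs_of_nonneg (hφnonneg _)]
          exact hφbdd _
        · filter_upwards [hG] with ω hω
          exact (hφcont.tendsto _).comp (tendsto_const_nhds.min hω.2.2)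
      exact ge_of_tendsto htend2 (Filter.Eventually.of_forall h1)
    -- φ(min(Y a, Z)) ≤ φ Z pointwise, with equal integrals
    have hminle : ∀ ω, φ (min (Y a ω) (Z ω)) ≤ φ (Z ω) := fun ω => hφmono (min_le_right _ _)
    have hminint : Integrable (fun ω => φ (min (Y a ω) (Z ω))) Q := hint _ ((hY a).min hZmeas)
    have hle2 : ∫ ω, φ (min (Y a ω) (Z ω)) ∂Q ≤ m :=
      (integral_mono_ae hminint hφZint (Filter.Eventually.of_forall hminle)).trans_eq hIZ
    have hdiff : ∫ ω, (φ (Z ω) - φ (min (Y a ω) (Z ω))) ∂Q = 0 := by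
      rw [integral_sub hφZint hminint, hIZ, le_antisymm hle2 hkey, sub_self]
    have heqae : (fun ω => φ (Z ω) - φ (min (Y a ω) (Z ω))) =ᵐ[Q] 0 :=
      (integral_eq_zero_iff_of_nonneg_ae
        (Filter.Eventually.of_forall fun ω => by simpa using hminle ω)
        (hφZint.sub hminint)).1 hdiff
    filter_upwards [heqae, hG, qsle_singleton.1 (hinf.1 a)] with ω hω hGω h0a
    have hZ0 : 0 ≤ Z ω := hGω.1
    have heq : φ (min (Y a ω) (Z ω)) = φ (Z ω) := by
      have := hω; simp only [Pi.zero_apply] at this; linarith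
    have hmin0 : 0 ≤ min (Y a ω) (Z ω) := le_min h0a hZ0
    have : min (Y a ω) (Z ω) = Z ω := by
      apply Real.arctan_injective
      simpa [hφdef, max_eq_left hmin0, max_eq_left hZ0] using heq
    rw [min_eq_right_iff] at this
    -- this : Z ω ≤ Y a ω? min (Ya) (Z) = Z means Z ≤ Y a
    exact this
  have hZ0 : Z ≤ᵐ[Q] fun _ => (0:ℝ) := qsle_singleton.1 (hinf.2 Z hZmeas hZlb)
  refine ⟨β, ?_⟩
  filter_upwards [hG, hZ0] with ω hGω hZω
  have : Z ω = 0 := le_antisymm hZω hGω.1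
  rw [← this]
  exact hGω.2.2
lemma subset_jSat {𝒞 : Set (Ω → ℝ)} (h : 𝒞 ⊆ L0 Ω) (Q : Measure Ω) : 𝒞 ⊆ jSat Q 𝒞 :=
  fun f hf => ⟨h hf, f, hf, Filter.EventuallyEq.rfl⟩

/-- `Q`-closedness of a set of measurable functions implies sequential order closedness. -/
lemma seqOrderClosed_of_qClosed {Q : Measure Ω} [IsProbabilityMeasure Q]
    {D : Set (Ω → ℝ)} (hD : D ⊆ L0 Ω) (h : QClosedSet {Q} D) : SeqOrderClosed {Q} D := by
  intro X x hX hx hconv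
  refine h X x hX hx fun Q' hQ' => ?_
  rw [Set.mem_singleton_iff] at hQ'; subst hQ'
  exact tendstoInMeasure_of_tendsto_ae (fun n => ((hD (hX n)).aestronglyMeasurable))
    (ae_tendsto_of_seqOrderConv hconv)

/-- `Q`-closedness implies order closedness (for nets), via the diagonal sequence. -/
lemma orderClosed_of_qClosed {Q : Measure Ω} [IsProbabilityMeasure Q]
    {D : Set (Ω → ℝ)} (hD : D ⊆ L0 Ω) (h : QClosedSet {Q} D) : OrderClosed {Q} D := by
  intro ι _ _ _ X x hX hx hnet
  obtain ⟨Y, hYmeas, hYanti, hinf, hdom⟩ := hnet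
  obtain ⟨β, hβ⟩ := exists_seq_tendsto_ae_of_net hYmeas hYanti hinf
  have hdom' : ∀ᵐ ω ∂Q, ∀ n : ℕ, |X (β n) ω - x ω| ≤ Y (β n) ω := by
    rw [ae_all_iff]; intro n; exact qsle_singleton.1 (hdom (β n))
  have hae : ∀ᵐ ω ∂Q, Tendsto (fun n => X (β n) ω) atTop (nhds (x ω)) := by
    filter_upwards [hβ, hdom'] with ω h1 h2
    have habs : Tendsto (fun n => |X (β n) ω - x ω|) atTop (nhds 0) :=
      squeeze_zero (fun n => abs_nonneg _) h2 h1
    rw [tendsto_iff_norm_sub_tendsto_zero]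
    simpa [Real.norm_eq_abs] using habs
  refine h (fun n => X (β n)) x (fun n => hX (β n)) hx fun Q' hQ' => ?_
  rw [Set.mem_singleton_iff] at hQ'; subst hQ'
  exact tendstoInMeasure_of_tendsto_ae
    (fun n => (hD (hX (β n))).aestronglyMeasurable) hae

/-- Sequential order closedness of `jSat Q 𝒞` implies `Q`-closedness. -/
lemma qClosed_of_seqOrderClosed {Q : Measure Ω} {𝒞 : Set (Ω → ℝ)}
    (h : SeqOrderClosed {Q} (jSat Q 𝒞)) : QClosedSet {Q} (jSat Q 𝒞) := by
  intro X x hX hx hconv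
  obtain ⟨ns, _, hae⟩ := (hconv Q rfl).exists_seq_tendsto_ae
  exact h (fun n => X (ns n)) x (fun n => hX (ns n)) hx
    (seqOrderConv_of_ae (fun n => (hX (ns n)).1) hx hae)

/-- Order closedness (nets) implies sequential order closedness, by specialization. -/
lemma seqOrderClosed_of_orderClosed {𝔓 : Set (Measure Ω)} {D : Set (Ω → ℝ)}
    (h : OrderClosed 𝔓 D) : SeqOrderClosed 𝔓 D := by
  intro X x hX hx hconv
  obtain ⟨Y, hYm, hYanti, hinf, hdom⟩ := hconv
  exact h (ULift ℕ) (fun a => X a.down) x (fun a => hX a.down) hx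
    ⟨fun a => Y a.down, fun a => hYm a.down, fun a b hab => hYanti a.down b.down hab,
     ⟨fun a => hinf.1 a.down, fun g hg hgle => hinf.2 g hg fun n => hgle ⟨n⟩⟩,
     fun a => hdom a.down⟩
lemma locallyQClosed_iff {Q : Measure Ω} {𝒞 : Set (Ω → ℝ)} (h𝒞 : 𝒞 ⊆ L0 Ω) :
    LocallyQClosed Q 𝒞 ↔ QClosedSet {Q} (jSat Q 𝒞) := by
  constructor
  · intro h X x hX hx hconv
    choose g hmem heq using fun n => (hX n).2
    have hconv' : TendstoInMeasure Q (fun n => g n) atTop x :=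
      TendstoInMeasure.congr (fun n => heq n) Filter.EventuallyEq.rfl (hconv Q rfl)
    obtain ⟨y, hy, hxy⟩ := h (fun n => g n) x hmem hx hconv'
    exact ⟨hx, y, hy, hxy⟩
  · intro h X x hX hx hconv
    have hmem := h X x (fun n => subset_jSat h𝒞 Q (hX n)) hx
      (fun Q' hQ' => by rw [Set.mem_singleton_iff] at hQ'; subst hQ'; exact hconv)
    obtain ⟨_, y, hy, hxy⟩ := hmem
    exact ⟨y, hy, hxy⟩

lemma qClosedSet_of_forall_qClosed {𝔓 𝒬 : Set (Measure Ω)} {𝒞 : Set (Ω → ℝ)}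
    (hred : IsReductionSet 𝔓 𝒬 𝒞) (h𝒞 : 𝒞 ⊆ L0 Ω)
    (h : ∀ Q ∈ 𝒬, QClosedSet {Q} (jSat Q 𝒞)) : QClosedSet 𝒬 𝒞 := by
  intro X x hX hx hconv
  rw [hred.2.2]
  refine Set.mem_iInter₂.2 fun Q hQ => ?_
  exact h Q hQ X x (fun n => subset_jSat h𝒞 Q (hX n)) hx
    (fun Q' hQ' => by rw [Set.mem_singleton_iff] at hQ'; subst hQ'; exact hconv _ hQ)

lemma seqOrderClosed_of_qClosedSet {𝔓 𝒬 : Set (Measure Ω)} {𝒞 : Set (Ω → ℝ)}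
    (h𝒞 : 𝒞 ⊆ L0 Ω) (h𝒬 : 𝒬 ⊆ PC 𝔓) (hsupp : ∀ Q ∈ 𝒬, SupportedMeasure 𝔓 Q)
    (h : QClosedSet 𝒬 𝒞) : SeqOrderClosed 𝔓 𝒞 := by
  intro X x hX hx hconv
  refine h X x hX hx fun Q hQ => ?_
  haveI : IsProbabilityMeasure Q := (h𝒬 hQ).1
  have htrans := seqOrderConv_transfer (h𝒬 hQ).2 (hsupp Q hQ)
    (fun n => h𝒞 (hX n)) hx hconv
  exact tendstoInMeasure_of_tendsto_ae (fun n => (h𝒞 (hX n)).aestronglyMeasurable)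
    (ae_tendsto_of_seqOrderConv htrans)

lemma orderClosed_of_forall_qClosed {𝔓 𝒬 : Set (Measure Ω)} {𝒞 : Set (Ω → ℝ)}
    (hred : IsReductionSet 𝔓 𝒬 𝒞) (h𝒞 : 𝒞 ⊆ L0 Ω)
    (hsupp : ∀ Q ∈ 𝒬, SupportedMeasure 𝔓 Q)
    (h : ∀ Q ∈ 𝒬, QClosedSet {Q} (jSat Q 𝒞)) : OrderClosed 𝔓 𝒞 := by
  intro ι _ _ _ X x hX hx hnet
  rw [hred.2.2]
  refine Set.mem_iInter₂.2 fun Q hQ => ?_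
  haveI : IsProbabilityMeasure Q := (hred.2.1 hQ).1
  have hnQ := netOrderConv_transfer (hred.2.1 hQ).2 (hsupp Q hQ)
    (fun a => h𝒞 (hX a)) hx hnet
  exact orderClosed_of_qClosed (fun f hf => hf.1) (h Q hQ) ι X x
    (fun a => subset_jSat h𝒞 Q (hX a)) hx hnQ

/-- The key solidity step: sequential order closedness of `𝒞` implies sequential order
closedness of `jSat Q 𝒞` (for a probability `Q`). -/
lemma seqOrderClosed_jSat {𝔓 : Set (Measure Ω)} {𝒞 : Set (Ω → ℝ)}
    (h𝒞 : 𝒞 ⊆ L0 Ω) (hsolid : Solid 𝔓 𝒞) {Q : Measure Ω}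
    (h2 : SeqOrderClosed 𝔓 𝒞) : SeqOrderClosed {Q} (jSat Q 𝒞) := by
  classical
  intro X x hX hx hconv
  have hae : ∀ᵐ ω ∂Q, Tendsto (fun n => X n ω) atTop (nhds (x ω)) :=
    ae_tendsto_of_seqOrderConv hconv
  choose g hmem heq using fun n => (hX n).2
  have hgae : ∀ᵐ ω ∂Q, Tendsto (fun n => g n ω) atTop (nhds (x ω)) := by
    have heq' : ∀ᵐ ω ∂Q, ∀ n, X n ω = g n ω := by
      rw [ae_all_iff]; intro n; exact heq n
    filter_upwards [hae, heq'] with ω h1 h2'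
    have : (fun n => g n ω) = fun n => X n ω := by ext n; rw [h2' n]
    rw [this]; exact h1
  rw [ae_iff] at hgae
  obtain ⟨Nset, hsub, hNmeas, hN0⟩ := exists_measurable_superset_of_null hgae
  set B : Set Ω := Nsetᶜ with hBdef
  have hBmeas : MeasurableSet B := hNmeas.compl
  have hBc : Q Bᶜ = 0 := by rwa [hBdef, compl_compl]
  have hBconv : ∀ ω ∈ B, Tendsto (fun n => g n ω) atTop (nhds (x ω)) := by
    intro ω hω
    by_contra hc
    exact hω (hsub (by simpa using hc))
  set g' : ℕ → Ω → ℝ := fun n ω => if ω ∈ B then g n ω else 0 with hg'def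
  set y : Ω → ℝ := fun ω => if ω ∈ B then x ω else 0 with hydef
  have hg'meas : ∀ n, Measurable (g' n) :=
    fun n => Measurable.ite hBmeas (h𝒞 (hmem n)) measurable_const
  have hymeas : Measurable y := Measurable.ite hBmeas hx measurable_const
  have hconv' : ∀ ω, Tendsto (fun n => g' n ω) atTop (nhds (y ω)) := by
    intro ω
    by_cases hω : ω ∈ B
    · simp only [hg'def, hydef, if_pos hω]
      exact hBconv ω hω
    · simp only [hg'def, hydef, if_neg hω]
      exact tendsto_const_nhds
  have hg'mem : ∀ n, g' n ∈ 𝒞 := by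
    intro n
    rcases hsolid with hs | ⟨hsub0, hs⟩
    · refine hs (g n) (hmem n) (g' n) (hg'meas n) (qsle_of_forall fun ω => ?_)
      by_cases hω : ω ∈ B
      · simp [hg'def, if_pos hω]
      · simp [hg'def, if_neg hω]
    · have hgpos : QSLe 𝔓 (fun _ => 0) (g n) := (hsub0 (hmem n)).2
      have h1 : g' n ∈ L0pos 𝔓 := by
        refine ⟨hg'meas n, fun P hP => ?_⟩
        filter_upwards [hgpos P hP] with ω hω
        by_cases hB : ω ∈ B
        · simpa [hg'def, if_pos hB] using hω
        · simp [hg'def, if_neg hB]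
      have h2' : QSLe 𝔓 (g' n) (g n) := by
        intro P hP
        filter_upwards [hgpos P hP] with ω hω
        by_cases hB : ω ∈ B
        · simp [hg'def, if_pos hB]
        · simpa [hg'def, if_neg hB] using hω
      exact hs (g n) (hmem n) (g' n) h1 h2'
  have hy : y ∈ 𝒞 :=
    h2 g' y hg'mem hymeas (seqOrderConv_of_forall hg'meas hymeas hconv')
  have hxy : x =ᵐ[Q] y := by
    have : ∀ᵐ ω ∂Q, ω ∈ B := by rw [ae_iff]; exact hBc
    filter_upwards [this] with ω hω
    simp [hydef, if_pos hω]
  exact ⟨hx, y, hy, hxy⟩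
/-- Equivalent notions of closedness for solid `𝒫`-sensitive sets
with a supported reduction set, including order closedness. -/
theorem stmt11 {Ω : Type*} [MeasurableSpace Ω]
    (𝔓 : Set (Measure Ω)) (h𝔓ne : 𝔓.Nonempty)
    (h𝔓prob : ∀ P ∈ 𝔓, IsProbabilityMeasure P)
    (𝒞 : Set (Ω → ℝ)) (h𝒞 : IsL0Set 𝔓 𝒞) (hsolid : Solid 𝔓 𝒞)
    (𝒬 : Set (Measure Ω)) (hred : IsReductionSet 𝔓 𝒬 𝒞)
    (hsupp : ∀ Q ∈ 𝒬, SupportedMeasure 𝔓 Q) :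
    (OrderClosed 𝔓 𝒞 ↔ SeqOrderClosed 𝔓 𝒞) ∧
    (OrderClosed 𝔓 𝒞 ↔ QClosedSet 𝒬 𝒞) ∧
    (OrderClosed 𝔓 𝒞 ↔ ∀ Q ∈ 𝒬, LocallyQClosed Q 𝒞) ∧
    (OrderClosed 𝔓 𝒞 ↔ ∀ Q ∈ 𝒬, QClosedSet {Q} (jSat Q 𝒞)) ∧
    (OrderClosed 𝔓 𝒞 ↔ ∀ Q ∈ 𝒬, OrderClosed {Q} (jSat Q 𝒞)) ∧
    (OrderClosed 𝔓 𝒞 ↔ ∀ Q ∈ 𝒬, SeqOrderClosed {Q} (jSat Q 𝒞)) := by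
  have h𝒞L0 : 𝒞 ⊆ L0 Ω := h𝒞.1
  have h𝒬PC : 𝒬 ⊆ PC 𝔓 := hred.2.1
  -- (2) implies (5) (via the solidity step and extraction of a.s. convergent subsequences)
  have h25 : SeqOrderClosed 𝔓 𝒞 → ∀ Q ∈ 𝒬, QClosedSet {Q} (jSat Q 𝒞) :=
    fun h Q _ => qClosed_of_seqOrderClosed (seqOrderClosed_jSat h𝒞L0 hsolid h)
  -- (5) implies (3)
  have h53 : (∀ Q ∈ 𝒬, QClosedSet {Q} (jSat Q 𝒞)) → QClosedSet 𝒬 𝒞 :=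
    qClosedSet_of_forall_qClosed hred h𝒞L0
  -- (3) implies (2) (via supportedness)
  have h32 : QClosedSet 𝒬 𝒞 → SeqOrderClosed 𝔓 𝒞 :=
    seqOrderClosed_of_qClosedSet h𝒞L0 h𝒬PC hsupp
  -- (5) implies (2)
  have h52 : (∀ Q ∈ 𝒬, QClosedSet {Q} (jSat Q 𝒞)) → SeqOrderClosed 𝔓 𝒞 :=
    fun h => h32 (h53 h)
  refine ⟨⟨fun h => seqOrderClosed_of_orderClosed h,
      fun h => orderClosed_of_forall_qClosed hred h𝒞L0 hsupp (h25 h)⟩,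
    ⟨fun h => h53 (h25 (seqOrderClosed_of_orderClosed h)),
      fun h => orderClosed_of_forall_qClosed hred h𝒞L0 hsupp (h25 (h32 h))⟩,
    ⟨fun h Q hQ => (locallyQClosed_iff h𝒞L0).2 (h25 (seqOrderClosed_of_orderClosed h) Q hQ),
      fun h => orderClosed_of_forall_qClosed hred h𝒞L0 hsupp
        (fun Q hQ => (locallyQClosed_iff h𝒞L0).1 (h Q hQ))⟩,
    ⟨fun h => h25 (seqOrderClosed_of_orderClosed h),
      fun h => orderClosed_of_forall_qClosed hred h𝒞L0 hsupp h⟩,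
    ⟨fun h Q hQ =>
        haveI : IsProbabilityMeasure Q := (h𝒬PC hQ).1
        orderClosed_of_qClosed (fun f hf => hf.1)
          (h25 (seqOrderClosed_of_orderClosed h) Q hQ),
      fun h => orderClosed_of_forall_qClosed hred h𝒞L0 hsupp
        (fun Q hQ => qClosed_of_seqOrderClosed (seqOrderClosed_of_orderClosed (h Q hQ)))⟩,
    ⟨fun h Q _ => seqOrderClosed_jSat h𝒞L0 hsolid (seqOrderClosed_of_orderClosed h),
      fun h => orderClosed_of_forall_qClosed hred h𝒞L0 hsupp
        (fun Q hQ => qClosed_of_seqOrderClosed (h Q hQ))⟩⟩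
end Robust
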